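/- Let Y(z) = Y − zI be the translated linearization matrix, where Y is the cyclic block matrix built from n×n complex matrices X^(1),...,X^(M). If Y(z) is invertible and z ≠ 0, then the top-left n×n block of Y(z)^{-1} equals (z^{-(M-1)} X^(1)···X^(M) − zI)^{-1}. -/

import Mathlib

open MeasureTheory ProbabilityTheory

noncomputable def euclNorm {ι : Type*} [Fintype ι] (v : ι → ℂ) : ℝ :=
  Real.sqrt (∑ i, ‖v i‖ ^ 2)

noncomputable def opNorm {ι κ : Type*} [Fintype ι] [Fintype κ] (A : Matrix ι κ ℂ) : ℝ :=
  sSup ((fun v => euclNorm (A.mulVec v)) '' {v | euclNorm v ≤ 1})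

noncomputable def sMin {ι κ : Type*} [Fintype ι] [Fintype κ] (A : Matrix ι κ ℂ) : ℝ :=
  sInf ((fun v => euclNorm (A.mulVec v)) '' {v | euclNorm v = 1})

/-- The `Mn × Mn` cyclic block linearization matrix with `X k` in block `(k, k+1)`
(indices mod `M`). -/
def cyclicY (M n : ℕ) (X : Fin M → Matrix (Fin n) (Fin n) ℂ) :
    Matrix (Fin M × Fin n) (Fin M × Fin n) ℂ :=
  fun p q => if q.1.val = (p.1.val + 1) % M then X p.1 p.2 q.2 else 0

/-- The translated linearization `Y(z) = Y - z I`. -/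
noncomputable def Ymat (M n : ℕ) (X : Fin M → Matrix (Fin n) (Fin n) ℂ) (z : ℂ) :
    Matrix (Fin M × Fin n) (Fin M × Fin n) ℂ :=
  cyclicY M n X - z • (1 : Matrix (Fin M × Fin n) (Fin M × Fin n) ℂ)

def sparseSet {ι : Type*} [Fintype ι] (a : ℝ) : Set (ι → ℂ) :=
  {x | ∃ s : Finset ι, (∀ i ∉ s, x i = 0) ∧ (s.card : ℝ) ≤ a * (Fintype.card ι)}

noncomputable def compSet {ι : Type*} [Fintype ι] (a b : ℝ) : Set (ι → ℂ) :=
  {x | euclNorm x = 1 ∧ ∃ y ∈ sparseSet a, euclNorm (x - y) ≤ b}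

noncomputable def incompSet {ι : Type*} [Fintype ι] (a b : ℝ) : Set (ι → ℂ) :=
  {x | euclNorm x = 1 ∧ x ∉ compSet a b}

noncomputable def distToSpan {ι : Type*} [Fintype ι] (x : ι → ℂ) (S : Set (ι → ℂ)) : ℝ :=
  sInf ((fun y => euclNorm (x - y)) '' (Submodule.span ℂ S : Set (ι → ℂ)))

/-- If `Y(z)` is invertible and `z ≠ 0`, the top-left `n × n` block of `Y(z)⁻¹`
equals `(z^{-(M-1)} X^(1)⋯X^(M) - z I)⁻¹`. -/
theorem stmt1 (M n : ℕ) (hM : 1 ≤ M) (hn : 1 ≤ n)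
    (X : Fin M → Matrix (Fin n) (Fin n) ℂ) (z : ℂ) (hz : z ≠ 0)
    (hinv : IsUnit (Ymat M n X z)) :
    ∀ a b : Fin n,
      (Ymat M n X z)⁻¹ ((⟨0, hM⟩ : Fin M), a) ((⟨0, hM⟩ : Fin M), b)
        = ((z ^ (M - 1))⁻¹ • (List.ofFn X).prod
            - z • (1 : Matrix (Fin n) (Fin n) ℂ))⁻¹ a b := by
  intro a b
  have hMpos : 0 < M := hM
  have hz' : (z : ℂ) ^ (M - 1) ≠ 0 := pow_ne_zero _ hz
  set Yz := Ymat M n X z with hYdef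
  have hdet : IsUnit Yz.det := (Matrix.isUnit_iff_isUnit_det _).mp hinv
  have hYinv : Yz * Yz⁻¹ = 1 := Matrix.mul_nonsing_inv _ hdet
  set T : ℕ → Matrix (Fin n) (Fin n) ℂ :=
    fun k => Matrix.of fun a b => Yz⁻¹ (⟨k % M, Nat.mod_lt _ hMpos⟩, a) (⟨0, hM⟩, b) with hT
  have hrel : ∀ (k : ℕ) (hk : k < M),
      X ⟨k, hk⟩ * T (k + 1) = z • T k + (if k = 0 then 1 else 0) := by
    intro k hk
    ext a b
    have h1 : (Yz * Yz⁻¹) (⟨k, hk⟩, a) (⟨0, hM⟩, b)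
        = (1 : Matrix (Fin M × Fin n) (Fin M × Fin n) ℂ) (⟨k, hk⟩, a) (⟨0, hM⟩, b) := by
      rw [hYinv]
    rw [Matrix.mul_apply, Fintype.sum_prod_type] at h1
    simp only [hYdef, Ymat, cyclicY, Matrix.sub_apply, Matrix.smul_apply, Matrix.one_apply,
      smul_eq_mul, mul_ite, mul_one, mul_zero, sub_mul, ite_mul, zero_mul,
      Finset.sum_sub_distrib] at h1
    have e1 : ∀ x : Fin M, (↑x = (k + 1) % M) = (x = (⟨(k + 1) % M, Nat.mod_lt _ hMpos⟩ : Fin M)) := by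
      intro x; simp [Fin.ext_iff]
    simp only [e1, Prod.mk.injEq, ite_and, Finset.sum_ite_irrel, Finset.sum_const_zero,
      Finset.sum_ite_eq, Finset.sum_ite_eq', Finset.mem_univ, if_true] at h1
    simp only [hT, Matrix.mul_apply, Matrix.add_apply, Matrix.smul_apply, Matrix.of_apply,
      smul_eq_mul, apply_ite (fun m : Matrix (Fin n) (Fin n) ℂ => m a b), Matrix.one_apply,
      Matrix.zero_apply, Nat.mod_eq_of_lt hk]
    simp only [Fin.mk.injEq] at h1
    simp only [hYdef, Ymat]
    rw [sub_eq_iff_eq_add] at h1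
    rw [h1]; ring
  have hTM : T M = T 0 := by
    ext a b; simp [hT, Nat.mod_self, Nat.zero_mod]
  have key : ∀ j : ℕ, j < M → ((List.ofFn X).drop (M - j)).prod * T 0 = z ^ j • T (M - j) := by
    intro j
    induction j with
    | zero =>
      intro _
      have : (List.ofFn X).drop (M - 0) = [] := by
        apply List.drop_eq_nil_of_le; simp
      rw [this]
      simp [hTM]
    | succ j ih =>
      intro hj
      have hjM : j < M := by omega
      have hi : M - (j + 1) < (List.ofFn X).length := by simp; omega
      have hpeel : (List.ofFn X).drop (M - (j + 1))
          = (List.ofFn X)[M - (j + 1)] :: (List.ofFn X).drop (M - (j + 1) + 1) :=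
        List.drop_eq_getElem_cons hi
      have hsucc : M - (j + 1) + 1 = M - j := by omega
      have hgetelem : (List.ofFn X)[M - (j + 1)]'hi = X ⟨M - (j + 1), by omega⟩ := by
        simp [List.getElem_ofFn]
      rw [hpeel, hsucc, List.prod_cons, hgetelem, Matrix.mul_assoc, ih hjM,
        Matrix.mul_smul]
      have hne : ¬ (M - (j + 1) = 0) := by omega
      have := hrel (M - (j + 1)) (by omega)
      rw [if_neg hne, add_zero] at this
      simp only [hsucc] at this
      rw [this, smul_smul, ← pow_succ]
  have hfinal : (List.ofFn X).prod * T 0 = z ^ M • T 0 + z ^ (M - 1) • 1 := by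
    have h0 : (List.ofFn X) = X ⟨0, hM⟩ :: (List.ofFn X).drop 1 := by
      have hi : 0 < (List.ofFn X).length := by simp; omega
      have := List.drop_eq_getElem_cons hi
      simpa [List.getElem_ofFn] using this
    have hk := key (M - 1) (by omega)
    rw [show M - (M - 1) = 1 by omega] at hk
    have h00 := hrel 0 hMpos
    rw [if_pos rfl] at h00
    calc (List.ofFn X).prod * T 0
        = X ⟨0, hM⟩ * (((List.ofFn X).drop 1).prod * T 0) := by
          conv_lhs => rw [h0]
          rw [List.prod_cons, Matrix.mul_assoc]
      _ = z ^ (M - 1) • (X ⟨0, hM⟩ * T 1) := by rw [hk, Matrix.mul_smul]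
      _ = z ^ (M - 1) • (z • T 0 + 1) := by rw [h00]
      _ = z ^ M • T 0 + z ^ (M - 1) • 1 := by
          rw [smul_add, smul_smul]
          congr 2
          rw [← pow_succ]
          congr 1
          omega
  have hB : ((z ^ (M - 1))⁻¹ • (List.ofFn X).prod - z • 1) * T 0 = 1 := by
    rw [Matrix.sub_mul, Matrix.smul_mul, hfinal, Matrix.smul_mul, Matrix.one_mul]
    rw [smul_add, smul_smul, smul_smul, inv_mul_cancel₀ hz', one_smul]
    have hzM : (z ^ (M - 1))⁻¹ * z ^ M = z := by
      rw [show M = (M - 1) + 1 by omega, pow_succ]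
      field_simp
      rw [Nat.add_sub_cancel]
    rw [hzM]
    abel
  have hBinv : ((z ^ (M - 1))⁻¹ • (List.ofFn X).prod
      - z • (1 : Matrix (Fin n) (Fin n) ℂ))⁻¹ = T 0 := Matrix.inv_eq_right_inv hB
  rw [hBinv]
  simp [hT]
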